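/- Let r be a univariate polynomial over a field K and T̂ ∈ K[x,y] such that r(x)·T̂(x,y) - x is symmetric in x and y. Then deg r ≤ 1. -/

import Mathlib

open MvPolynomial

/-- The automorphism of `K[x,y]` swapping the two variables. -/
noncomputable def s2 {K : Type*} [Field K] :
    MvPolynomial (Fin 2) K →ₐ[K] MvPolynomial (Fin 2) K :=
  rename (Equiv.swap 0 1)

/-- If `r` is a univariate polynomial and `T̂ ∈ K[x,y]` is such that
`r(x)·T̂(x,y) - x` is symmetric in `x` and `y`, then `deg r ≤ 1`. -/
theorem deg_r_le_one {K : Type*} [Field K]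
    (r : Polynomial K) (That : MvPolynomial (Fin 2) K)
    (hsym : s2 (Polynomial.aeval (X 0 : MvPolynomial (Fin 2) K) r * That - X 0)
      = Polynomial.aeval (X 0 : MvPolynomial (Fin 2) K) r * That - X 0) :
    r.natDegree ≤ 1 := by
  by_contra h
  push_neg at h
  -- rewrite the symmetry hypothesis
  have hX0 : s2 (X 0 : MvPolynomial (Fin 2) K) = X 1 := by
    simp [s2, rename_X]
  have key : Polynomial.aeval (X 1 : MvPolynomial (Fin 2) K) r * s2 That - X 1
      = Polynomial.aeval (X 0 : MvPolynomial (Fin 2) K) r * That - X 0 := by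
    rw [← hsym, map_sub, map_mul, hX0,
      ← Polynomial.aeval_algHom_apply s2 (X 0 : MvPolynomial (Fin 2) K) r, hX0]
  classical
  set L := AlgebraicClosure K
  have hr0 : r ≠ 0 := by
    intro h0; rw [h0] at h; simp at h
  have hdeg : (r.map (algebraMap K L)).degree ≠ 0 := by
    rw [Polynomial.degree_map]
    intro h0
    have := Polynomial.natDegree_eq_zero_iff_degree_le_zero.mpr (le_of_eq h0)
    omega
  obtain ⟨α, hα⟩ := IsAlgClosed.exists_root _ hdeg
  have hαr : Polynomial.aeval α r = 0 := by
    rwa [Polynomial.aeval_def, Polynomial.eval₂_eq_eval_map]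
  -- the evaluation map
  set v : Fin 2 → Polynomial L := ![Polynomial.C α, Polynomial.X] with hv
  set ψ : MvPolynomial (Fin 2) K →ₐ[K] Polynomial L := MvPolynomial.aeval v with hψ
  have hkey2 := congrArg ψ key
  rw [map_sub, map_sub, map_mul, map_mul, ← Polynomial.aeval_algHom_apply ψ (X 1) r,
    ← Polynomial.aeval_algHom_apply ψ (X 0) r] at hkey2
  have hψ0 : ψ (X 0) = Polynomial.C α := by simp [hψ, hv]
  have hψ1 : ψ (X 1) = Polynomial.X := by simp [hψ, hv]
  rw [hψ0, hψ1] at hkey2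
  have hCα : Polynomial.aeval (Polynomial.C α : Polynomial L) r = 0 := by
    rw [show (Polynomial.C α : Polynomial L) = Polynomial.CAlgHom (R := K) (A := L) α from rfl,
      Polynomial.aeval_algHom_apply, hαr, map_zero]
  have hXr : Polynomial.aeval (Polynomial.X : Polynomial L) r = r.map (algebraMap K L) := by
    have := Polynomial.aeval_algHom_apply (Polynomial.mapAlgHom (Algebra.ofId K L))
      (Polynomial.X : Polynomial K) r
    simpa [Polynomial.aeval_X_left_apply, Polynomial.mapAlgHom, Algebra.ofId] using this
  rw [hCα, hXr, zero_mul, zero_sub] at hkey2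
  -- now: r.map * ψ(s2 That) - X = - C α
  have heq : r.map (algebraMap K L) * ψ (s2 That) = Polynomial.X - Polynomial.C α := by
    linear_combination hkey2
  have hmapdeg : (r.map (algebraMap K L)).natDegree = r.natDegree :=
    Polynomial.natDegree_map_eq_of_injective (algebraMap K L).injective r
  have hne : ψ (s2 That) ≠ 0 := by
    intro h0
    rw [h0, mul_zero] at heq
    have := Polynomial.X_sub_C_ne_zero (R := L) α
    exact this heq.symm
  have hrm : r.map (algebraMap K L) ≠ 0 := by
    intro h0
    have := congrArg Polynomial.natDegree h0
    rw [hmapdeg] at this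
    simp at this
    omega
  have := congrArg Polynomial.natDegree heq
  rw [Polynomial.natDegree_mul hrm hne, Polynomial.natDegree_X_sub_C, hmapdeg] at this
  omega
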